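/- (Composite Bäcklund transformation s₋s₂ for Painlevé III′.) Let (q, p, H) solve the Painlevé III′ Hamiltonian system with parameters v1, v2 ∈ ℂ on an open set U ⊆ ℂ with 0 ∉ U, and assume p(s) ≠ 0 and p(s) ≠ 1 for all s ∈ U. Then there exist functions (q̃, p̃) solving the Painlevé III′ Hamiltonian system with parameters (−v1, v2) on −U := {−s : s ∈ U} whose Hamiltonian H̃ satisfies (−s)·H̃(−s) = s·H(s) − s for all s ∈ U. -/

import Mathlib

open Complex

/-- `(q, p, H)` solves the Painlevé III′ Hamiltonian system with parameters
`v1, v2` on an open set `U ⊆ ℂ` with `0 ∉ U`. -/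
def SolvesPIII' (v1 v2 : ℂ) (U : Set ℂ) (q p H : ℂ → ℂ) : Prop :=
  IsOpen U ∧ (0 : ℂ) ∉ U ∧
    DifferentiableOn ℂ q U ∧ DifferentiableOn ℂ p U ∧
    (∀ s ∈ U, s * H s =
      q s ^ 2 * p s ^ 2 - (q s ^ 2 + v1 * q s - s) * p s
        + (1 / 2) * (v1 + v2) * q s) ∧
    (∀ s ∈ U, s * deriv q s = 2 * q s ^ 2 * p s - q s ^ 2 - v1 * q s + s) ∧
    (∀ s ∈ U, s * deriv p s =
      -2 * q s * p s ^ 2 + 2 * q s * p s + v1 * p s - (1 / 2) * (v1 + v2))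

set_option maxHeartbeats 3200000 in
/-- Composite Bäcklund transformation `s₋s₂` for Painlevé III′: from a solution
with parameters `(v1, v2)` on `U` (with `p` avoiding `0` and `1`) one obtains a
solution with parameters `(−v1, v2)` on `−U` whose Hamiltonian satisfies
`(−s)·H̃(−s) = s·H(s) − s`. -/
theorem painleveIIIprime_backlund_sminus_s2 (v1 v2 : ℂ) (U : Set ℂ)
    (q p H : ℂ → ℂ)
    (hsol : SolvesPIII' v1 v2 U q p H)
    (hp0 : ∀ s ∈ U, p s ≠ 0)
    (hp1 : ∀ s ∈ U, p s ≠ 1) :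
    ∃ qt pt Ht : ℂ → ℂ,
      SolvesPIII' (-v1) v2 {s : ℂ | -s ∈ U} qt pt Ht ∧
      ∀ s ∈ U, (-s) * Ht (-s) = s * H s - s := by
  obtain ⟨hU, h0U, hq, hp, hH, hqeq, hpeq⟩ := hsol
  set qt : ℂ → ℂ := fun s =>
    -q (-s) + (v1 + v2 - 2 * v1 * p (-s)) / (2 * p (-s) * (1 - p (-s))) with hqt
  set pt : ℂ → ℂ := fun s => 1 - p (-s) with hpt
  set Ht : ℂ → ℂ := fun s =>
    (qt s ^ 2 * pt s ^ 2 - (qt s ^ 2 + (-v1) * qt s - s) * pt s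
      + (1 / 2) * (-v1 + v2) * qt s) / s with hHt
  have hV : IsOpen {s : ℂ | -s ∈ U} := hU.preimage (continuous_neg)
  have h0V : (0 : ℂ) ∉ {s : ℂ | -s ∈ U} := by simpa using h0U
  -- basic nonvanishing facts
  have key : ∀ s ∈ U, s ≠ 0 ∧ p s ≠ 0 ∧ (1 : ℂ) - p s ≠ 0 := by
    intro s hs
    refine ⟨fun h => h0U (h ▸ hs), hp0 s hs, sub_ne_zero.mpr fun h => hp1 s hs h.symm⟩
  -- differentiability of the composed functions
  have hdiffq : ∀ s₀ ∈ U, DifferentiableAt ℂ q s₀ := fun s₀ hs₀ =>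
    (hq s₀ hs₀).differentiableAt (hU.mem_nhds hs₀)
  have hdiffp : ∀ s₀ ∈ U, DifferentiableAt ℂ p s₀ := fun s₀ hs₀ =>
    (hp s₀ hs₀).differentiableAt (hU.mem_nhds hs₀)
  have hqtd : ∀ s₀ ∈ {s : ℂ | -s ∈ U}, DifferentiableAt ℂ qt s₀ := by
    intro s₀ hs₀
    have h := key (-s₀) hs₀
    have hqn : DifferentiableAt ℂ (fun s => q (-s)) s₀ :=
      (hdiffq (-s₀) hs₀).comp s₀ (differentiable_neg _)
    have hpn : DifferentiableAt ℂ (fun s => p (-s)) s₀ :=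
      (hdiffp (-s₀) hs₀).comp s₀ (differentiable_neg _)
    have hden : (2 * p (-s₀) * (1 - p (-s₀))) ≠ 0 :=
      mul_ne_zero (mul_ne_zero two_ne_zero h.2.1) h.2.2
    exact (hqn.neg).add
      (((differentiableAt_const _).sub ((differentiableAt_const _).mul hpn)).div
        (((differentiableAt_const _).mul hpn).mul
          ((differentiableAt_const _).sub hpn)) hden)
  have hptd : ∀ s₀ ∈ {s : ℂ | -s ∈ U}, DifferentiableAt ℂ pt s₀ := by
    intro s₀ hs₀
    exact (differentiableAt_const _).sub
      ((hdiffp (-s₀) hs₀).comp s₀ (differentiable_neg _))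
  refine ⟨qt, pt, Ht, ⟨hV, h0V, fun s hs => (hqtd s hs).differentiableWithinAt,
    fun s hs => (hptd s hs).differentiableWithinAt, ?_, ?_, ?_⟩, ?_⟩
  · -- Hamiltonian defining equation
    intro s hs
    have hs0 : s ≠ 0 := fun h => h0V (h ▸ hs)
    rw [hHt]
    field_simp
  · -- equation for qt
    intro s hs
    obtain ⟨ht0, hP0, hP1⟩ := key (-s) hs
    -- derivatives of the building blocks
    have hqn : HasDerivAt (fun s => q (-s)) (-(deriv q (-s))) s := by
      have := ((hdiffq (-s) hs).hasDerivAt.comp s (hasDerivAt_neg s))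
      simpa [mul_comm, Function.comp_def] using this
    have hpn : HasDerivAt (fun s => p (-s)) (-(deriv p (-s))) s := by
      have := ((hdiffp (-s) hs).hasDerivAt.comp s (hasDerivAt_neg s))
      simpa [mul_comm, Function.comp_def] using this
    set Q := deriv q (-s) with hQ
    set P := deriv p (-s) with hPd
    have hden : (2 * p (-s) * (1 - p (-s))) ≠ 0 :=
      mul_ne_zero (mul_ne_zero two_ne_zero hP0) hP1
    have hnum : HasDerivAt (fun s => v1 + v2 - 2 * v1 * p (-s))
        (-(2 * v1 * (-P))) s := by
      simpa using (((hpn.const_mul (2 * v1)).const_sub (v1 + v2)))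
    have hdenD : HasDerivAt (fun s => 2 * p (-s) * (1 - p (-s)))
        (2 * (-P) * (1 - p (-s)) + 2 * p (-s) * (-(-P))) s :=
      (hpn.const_mul 2).mul (hpn.const_sub 1)
    have hqtD : HasDerivAt qt
        ((-(-Q)) + ((-(2 * v1 * (-P))) * (2 * p (-s) * (1 - p (-s)))
          - (v1 + v2 - 2 * v1 * p (-s))
            * (2 * (-P) * (1 - p (-s)) + 2 * p (-s) * (-(-P))))
          / (2 * p (-s) * (1 - p (-s))) ^ 2) s := by
      rw [hqt]
      exact (hqn.neg).add (hnum.div hdenD hden)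
    rw [hqtD.deriv]
    have hs0 : s ≠ 0 := fun h => by simp [h] at ht0
    have hQval : Q = (q (-s) ^ 2 + v1 * q (-s) - 2 * q (-s) ^ 2 * p (-s) + s) / s := by
      rw [eq_div_iff hs0]
      have := hqeq (-s) hs
      linear_combination -this
    have hPval : P = (2 * q (-s) * p (-s) ^ 2 - 2 * q (-s) * p (-s) - v1 * p (-s)
        + (1 / 2) * (v1 + v2)) / s := by
      rw [eq_div_iff hs0]
      have := hpeq (-s) hs
      linear_combination -this
    simp only [hqt, hpt]
    rw [hQval, hPval]
    set a := q (-s) with ha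
    set b := p (-s) with hb
    obtain ⟨d, hd⟩ : ∃ d : ℂ, d = 2 * b * (1 - b) := ⟨_, rfl⟩
    have hdne : d ≠ 0 := by rw [hd]; exact mul_ne_zero (mul_ne_zero two_ne_zero hP0) hP1
    rw [← hd]
    field_simp
    rw [hd]
    ring
  · -- equation for pt
    intro s hs
    obtain ⟨ht0, hP0, hP1⟩ := key (-s) hs
    have hpn : HasDerivAt (fun s => p (-s)) (-(deriv p (-s))) s := by
      have := ((hdiffp (-s) hs).hasDerivAt.comp s (hasDerivAt_neg s))
      simpa [mul_comm, Function.comp_def] using this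
    have hptD : HasDerivAt pt (-(-(deriv p (-s)))) s := by
      rw [hpt]; exact hpn.const_sub 1
    rw [hptD.deriv]
    have hs0 : s ≠ 0 := fun h => by simp [h] at ht0
    have hPval : deriv p (-s) = (2 * q (-s) * p (-s) ^ 2 - 2 * q (-s) * p (-s)
        - v1 * p (-s) + (1 / 2) * (v1 + v2)) / s := by
      rw [eq_div_iff hs0]
      have := hpeq (-s) hs
      linear_combination -this
    simp only [hpt, hqt]
    rw [hPval]
    set a := q (-s) with ha
    set b := p (-s) with hb
    obtain ⟨d, hd⟩ : ∃ d : ℂ, d = 2 * b * (1 - b) := ⟨_, rfl⟩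
    have hdne : d ≠ 0 := by rw [hd]; exact mul_ne_zero (mul_ne_zero two_ne_zero hP0) hP1
    rw [← hd]
    field_simp
    rw [hd]
    ring
  · -- Hamiltonian relation
    intro s hs
    obtain ⟨hs0, hP0, hP1⟩ := key s hs
    have hHs := hH s hs
    have hsne : (-s : ℂ) ≠ 0 := neg_ne_zero.mpr hs0
    simp only [hHt, hqt, hpt, neg_neg]
    rw [hHs]
    set a := q s with ha
    set b := p s with hb
    have h1b : (1 : ℂ) - b ≠ 0 := hP1
    obtain ⟨d, hd⟩ : ∃ d : ℂ, d = 2 * b * (1 - b) := ⟨_, rfl⟩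
    have hdne : d ≠ 0 := by rw [hd]; exact mul_ne_zero (mul_ne_zero two_ne_zero hP0) h1b
    rw [← hd]
    field_simp
    rw [hd]
    ring
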